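/- arXiv:1907.04555 — 5 statements merged into one kernel-verified Lean document; each statement's English description precedes it below -/
import Mathlib

section
/- Under the discretized (Galerkin) piezoelectric setting: for every T > 0, every continuous f : ℝ → ℝⁿ, every continuous g : ℝ → ℝᵏ, and every pair of initial data u₀, u₁ ∈ ℝⁿ, there exists exactly one pair (u, φ) with u : ℝ → ℝⁿ twice continuously differentiable on [0, T] and φ : ℝ → ℝᵏ continuous on [0, T] such that for all t ∈ [0, T]: M u''(t) + α M u'(t) + K u(t) + β K u'(t) + C φ(t) = f(t), Cᵀ u(t) − A φ(t) = g(t), u(0) = u₀, and u'(0) = u₁. -/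
open MeasureTheory Matrix Set Filter

set_option synthInstance.maxHeartbeats 1000000
set_option maxHeartbeats 1000000

open MeasureTheory Matrix Set Filter

section Helpers

variable {E F : Type*} [NormedAddCommGroup E] [NormedSpace ℝ E]
  [NormedAddCommGroup F] [NormedSpace ℝ F]

lemma hasDerivAt_fst' {f : ℝ → E × F} {d : E × F} {t : ℝ} (h : HasDerivAt f d t) :
    HasDerivAt (fun s => (f s).1) d.1 t := by
  simpa using h.hasFDerivAt.fst.hasDerivAt

lemma hasDerivAt_snd' {f : ℝ → E × F} {d : E × F} {t : ℝ} (h : HasDerivAt f d t) :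
    HasDerivAt (fun s => (f s).2) d.2 t := by
  simpa using h.hasFDerivAt.snd.hasDerivAt

end Helpers

section LinODE

open NormedSpace

variable {W : Type*} [NormedAddCommGroup W] [NormedSpace ℝ W] [CompleteSpace W]

lemma linear_ode_exists (B : W →L[ℝ] W) (h : ℝ → W) (hh : Continuous h) (x₀ : W) :
    ∃ x : ℝ → W, x 0 = x₀ ∧ ∀ t, HasDerivAt x (B (x t) + h t) t := by
  letI : NormedAlgebra ℚ (W →L[ℝ] W) := NormedAlgebra.restrictScalars ℚ ℝ _
  have hEc : Continuous fun s : ℝ => exp ((-s) • B) :=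
    exp_continuous.comp (continuous_neg.smul continuous_const)
  have hic : Continuous fun s : ℝ => (exp ((-s) • B)) (h s) := hEc.clm_apply hh
  set y : ℝ → W := fun t => x₀ + ∫ s in (0:ℝ)..t, (exp ((-s) • B)) (h s) with hy_def
  set x : ℝ → W := fun t => (exp (t • B)) (y t) with hx_def
  have hkey : ∀ t : ℝ, exp (t • B) * exp ((-t) • B) = 1 := by
    intro t
    rw [← NormedSpace.exp_add_of_commute (((Commute.refl B).smul_left t).smul_right (-t))]
    simp [← add_smul]
  refine ⟨x, ?_, ?_⟩
  · simp [hx_def, hy_def]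
  · intro t
    have hyd : HasDerivAt y ((exp ((-t) • B)) (h t)) t :=
      (hic.integral_hasStrictDerivAt 0 t).hasDerivAt.const_add x₀
    have hEd : HasDerivAt (fun t : ℝ => exp (t • B)) (B * exp (t • B)) t :=
      hasDerivAt_exp_smul_const' B t
    have := hEd.clm_apply hyd
    convert this using 1
    rw [ContinuousLinearMap.mul_apply, ← ContinuousLinearMap.mul_apply (exp (t • B)),
      hkey t, ContinuousLinearMap.one_apply]

omit [CompleteSpace W] in
lemma linear_ode_unique (B : W →L[ℝ] W) (h : ℝ → W) {x y : ℝ → W} {a b : ℝ}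
    (hx : ∀ t ∈ Icc a b, HasDerivAt x (B (x t) + h t) t)
    (hy : ∀ t ∈ Icc a b, HasDerivAt y (B (y t) + h t) t)
    (hxy : x a = y a) : EqOn x y (Icc a b) := by
  have hv : ∀ t : ℝ, LipschitzOnWith (1 * ‖B‖₊) (fun z => B z + h t) univ := by
    intro t
    exact (((isometry_add_right (h t)).lipschitz.comp B.lipschitz)).lipschitzOnWith
  exact ODE_solution_unique_of_mem_Icc_right (fun t _ => hv t)
    (fun t ht => (hx t ht).continuousAt.continuousWithinAt)
    (fun t ht => ((hx t (Ico_subset_Icc_self ht)).hasDerivWithinAt))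
    (fun t _ => mem_univ _)
    (fun t ht => (hy t ht).continuousAt.continuousWithinAt)
    (fun t ht => ((hy t (Ico_subset_Icc_self ht)).hasDerivWithinAt))
    (fun t _ => mem_univ _) hxy

end LinODE

/-- The pair `(u, φ)` (with first and second derivatives `u'`, `u''` of `u`) solves the
discretized (Galerkin) piezoelectric system with mass matrix `M`, stiffness matrix `K`,
dielectric matrix `A`, piezoelectric coupling matrix `C`, Rayleigh damping parameters
`α, β` and forcing terms `f, g` on the time set `I`. -/
def PiezoSolves {n k : ℕ} (M K : Matrix (Fin n) (Fin n) ℝ)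
    (A : Matrix (Fin k) (Fin k) ℝ) (C : Matrix (Fin n) (Fin k) ℝ)
    (α β : ℝ) (f : ℝ → Fin n → ℝ) (g : ℝ → Fin k → ℝ)
    (u u' u'' : ℝ → Fin n → ℝ) (φ : ℝ → Fin k → ℝ) (I : Set ℝ) : Prop :=
  (∀ t ∈ I, HasDerivAt u (u' t) t) ∧
  (∀ t ∈ I, HasDerivAt u' (u'' t) t) ∧
  (∀ t ∈ I,
    M.mulVec (u'' t) + α • M.mulVec (u' t) + K.mulVec (u t)
      + β • K.mulVec (u' t) + C.mulVec (φ t) = f t) ∧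
  (∀ t ∈ I, Cᵀ.mulVec (u t) - A.mulVec (φ t) = g t)

/-- Existence and uniqueness of the Galerkin (discretized) solution: for continuous
forcing `f, g` and initial data `u₀, u₁` there is exactly one pair `(u, φ)` (twice
continuously differentiable `u`, continuous `φ`) solving the discretized piezoelectric
system on `[0, T]` with `u 0 = u₀`, `u' 0 = u₁`. -/
theorem piezo_discrete_exists_unique {n k : ℕ}
    (M K : Matrix (Fin n) (Fin n) ℝ) (A : Matrix (Fin k) (Fin k) ℝ)
    (C : Matrix (Fin n) (Fin k) ℝ) (α β : ℝ)
    (hM : M.PosDef) (hK : K.PosSemidef) (hA : A.PosDef)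
    (hα : 0 ≤ α) (hβ : 0 ≤ β)
    (T : ℝ) (hT : 0 < T)
    (f : ℝ → Fin n → ℝ) (hf : Continuous f)
    (g : ℝ → Fin k → ℝ) (hg : Continuous g)
    (u₀ u₁ : Fin n → ℝ) :
    ∃ (u u' u'' : ℝ → Fin n → ℝ) (φ : ℝ → Fin k → ℝ),
      (PiezoSolves M K A C α β f g u u' u'' φ (Icc 0 T) ∧
        ContinuousOn u'' (Icc 0 T) ∧ ContinuousOn φ (Icc 0 T) ∧
        u 0 = u₀ ∧ u' 0 = u₁) ∧
      ∀ (v v' v'' : ℝ → Fin n → ℝ) (ψ : ℝ → Fin k → ℝ),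
        PiezoSolves M K A C α β f g v v' v'' ψ (Icc 0 T) →
        ContinuousOn v'' (Icc 0 T) → ContinuousOn ψ (Icc 0 T) →
        v 0 = u₀ → v' 0 = u₁ →
        ∀ t ∈ Icc (0 : ℝ) T, v t = u t ∧ ψ t = φ t := by
  classical
  have hMd : IsUnit M.det := (Matrix.isUnit_iff_isUnit_det M).1 hM.isUnit
  have hAd : IsUnit A.det := (Matrix.isUnit_iff_isUnit_det A).1 hA.isUnit
  have hMM : M * M⁻¹ = 1 := Matrix.mul_nonsing_inv M hMd
  have hMM' : M⁻¹ * M = 1 := Matrix.nonsing_inv_mul M hMd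
  have hAA : A * A⁻¹ = 1 := Matrix.mul_nonsing_inv A hAd
  have hAA' : A⁻¹ * A = 1 := Matrix.nonsing_inv_mul A hAd
  have hinj : Function.Injective (M.mulVec) := Matrix.mulVec_injective_iff_isUnit.2 hM.isUnit
  set P : Matrix (Fin n) (Fin n) ℝ := M⁻¹ * (K + C * A⁻¹ * Cᵀ) with hP
  set Q : Matrix (Fin n) (Fin n) ℝ := α • (1 : Matrix (Fin n) (Fin n) ℝ) + β • (M⁻¹ * K) with hQ
  set R : Matrix (Fin n) (Fin k) ℝ := M⁻¹ * C * A⁻¹ with hR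
  set h2 : ℝ → (Fin n → ℝ) := fun t => M⁻¹ *ᵥ f t + R *ᵥ g t with hh2
  -- the key algebraic identity
  have hMP : M * P = K + C * A⁻¹ * Cᵀ := by
    rw [hP, ← Matrix.mul_assoc, hMM, Matrix.one_mul]
  have hMQ : M * Q = α • M + β • K := by
    rw [hQ, mul_add, mul_smul_comm, mul_one, mul_smul_comm, ← Matrix.mul_assoc, hMM,
      Matrix.one_mul]
  have hMR : M * R = C * A⁻¹ := by
    rw [hR]
    rw [← Matrix.mul_assoc, ← Matrix.mul_assoc, hMM, Matrix.one_mul]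
  have key1 : ∀ (a b ft : Fin n → ℝ) (gt : Fin k → ℝ),
      M *ᵥ (-(P *ᵥ a) - Q *ᵥ b + (M⁻¹ *ᵥ ft + R *ᵥ gt)) + α • (M *ᵥ b) + K *ᵥ a
        + β • (K *ᵥ b) + C *ᵥ (A⁻¹ *ᵥ (Cᵀ *ᵥ a - gt)) = ft := by
    intro a b ft gt
    simp only [Matrix.mulVec_add, Matrix.mulVec_sub, Matrix.mulVec_neg, Matrix.mulVec_mulVec,
      hMP, hMQ, hMR, hMM, ← Matrix.mul_assoc, Matrix.one_mulVec, Matrix.add_mulVec,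
      Matrix.smul_mulVec]
    abel
  -- the first-order system
  let BL : ((Fin n → ℝ) × (Fin n → ℝ)) →ₗ[ℝ] ((Fin n → ℝ) × (Fin n → ℝ)) :=
    { toFun := fun p => (p.2, -(P *ᵥ p.1) - Q *ᵥ p.2)
      map_add' := by
        intro p q
        refine Prod.ext rfl ?_
        simp only [Prod.snd_add, Prod.fst_add, Matrix.mulVec_add]
        abel
      map_smul' := by
        intro c p
        refine Prod.ext rfl ?_
        simp only [Prod.smul_snd, Prod.smul_fst, Matrix.mulVec_smul, RingHom.id_apply]
        module }
  let B := LinearMap.toContinuousLinearMap BL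
  have hB : ∀ p, B p = (p.2, -(P *ᵥ p.1) - Q *ᵥ p.2) := fun p => rfl
  set hfun : ℝ → (Fin n → ℝ) × (Fin n → ℝ) := fun t => ((0 : Fin n → ℝ), h2 t) with hhfun
  have hfc : Continuous hfun :=
    continuous_const.prodMk ((continuous_const.matrix_mulVec hf).add
      (continuous_const.matrix_mulVec hg))
  obtain ⟨x, hx0, hxd⟩ := linear_ode_exists B hfun hfc (u₀, u₁)
  have hxC : Continuous x := by
    rw [continuous_iff_continuousAt]; exact fun t => (hxd t).continuousAt
  set u : ℝ → Fin n → ℝ := fun t => (x t).1 with hu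
  set u' : ℝ → Fin n → ℝ := fun t => (x t).2 with hu'
  set u'' : ℝ → Fin n → ℝ := fun t => -(P *ᵥ (x t).1) - Q *ᵥ (x t).2 + h2 t with hu''
  set φ : ℝ → Fin k → ℝ := fun t => A⁻¹ *ᵥ (Cᵀ *ᵥ (x t).1 - g t) with hφ
  have hud : ∀ t, HasDerivAt u (u' t) t := by
    intro t
    have := hasDerivAt_fst' (hxd t)
    simpa [hB, hhfun] using this
  have hud' : ∀ t, HasDerivAt u' (u'' t) t := by
    intro t
    have := hasDerivAt_snd' (hxd t)
    simpa [hB, hhfun, hu''] using this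
  refine ⟨u, u', u'', φ, ⟨⟨fun t _ => hud t, fun t _ => hud' t, ?_, ?_⟩, ?_, ?_, ?_, ?_⟩, ?_⟩
  · intro t _
    exact key1 (u t) (u' t) (f t) (g t)
  · intro t _
    simp only [hφ, hu]
    rw [Matrix.mulVec_mulVec, hAA, Matrix.one_mulVec, sub_sub_cancel]
  · exact (((continuous_const.matrix_mulVec hxC.fst).neg.sub
      (continuous_const.matrix_mulVec hxC.snd)).add
      ((continuous_const.matrix_mulVec hf).add
        (continuous_const.matrix_mulVec hg))).continuousOn
  · exact (continuous_const.matrix_mulVec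
      ((continuous_const.matrix_mulVec hxC.fst).sub hg)).continuousOn
  · show (x 0).1 = u₀
    rw [hx0]
  · show (x 0).2 = u₁
    rw [hx0]
  · -- uniqueness
    intro v v' v'' ψ hsol hv'' hψ hv0 hv1
    obtain ⟨hvd, hvd', heq1v, heq2v⟩ := hsol
    have hψ_eq : ∀ t ∈ Icc (0:ℝ) T, ψ t = A⁻¹ *ᵥ (Cᵀ *ᵥ v t - g t) := by
      intro t ht
      have h1 : A *ᵥ ψ t = Cᵀ *ᵥ v t - g t := by
        rw [← heq2v t ht]; abel
      rw [← h1, Matrix.mulVec_mulVec, hAA', Matrix.one_mulVec]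
    have hv''_eq : ∀ t ∈ Icc (0:ℝ) T,
        v'' t = -(P *ᵥ v t) - Q *ᵥ v' t + h2 t := by
      intro t ht
      have e1 := heq1v t ht
      rw [hψ_eq t ht] at e1
      have h3 := e1.trans (key1 (v t) (v' t) (f t) (g t)).symm
      exact hinj (add_right_cancel (add_right_cancel (add_right_cancel (add_right_cancel h3))))
    have hyd : ∀ t ∈ Icc (0:ℝ) T,
        HasDerivAt (fun s => (v s, v' s)) (B (v t, v' t) + hfun t) t := by
      intro t ht
      have hd := (hvd t ht).prodMk (hvd' t ht)
      have : B (v t, v' t) + hfun t = (v' t, v'' t) := by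
        rw [hB, hhfun]
        refine Prod.ext (by simp) ?_
        simp only [Prod.mk_add_mk, Prod.snd]
        rw [hv''_eq t ht]
      rw [this]
      exact hd
    have hEq : EqOn (fun s => (v s, v' s)) x (Icc (0:ℝ) T) := by
      refine linear_ode_unique B hfun hyd (fun t _ => hxd t) ?_
      rw [hx0, hv0, hv1]
    intro t ht
    have h4 := hEq ht
    have h5 : v t = u t := congrArg Prod.fst h4
    refine ⟨h5, ?_⟩
    rw [hψ_eq t ht, hφ, h5]
end

section
/- Under the discretized (Galerkin) piezoelectric setting: let T > 0, let f : ℝ → ℝⁿ be continuous, let g : ℝ → ℝᵏ be continuously differentiable, and let (u, φ) solve the discretized piezoelectric system on [0, T] with u twice continuously differentiable and φ continuously differentiable. Then for every t ∈ [0, T] the energy identity holds: ⟨M u'(t), u'(t)⟩ + ⟨K u(t), u(t)⟩ + ⟨A φ(t), φ(t)⟩ + 2α ∫₀ᵗ ⟨M u'(s), u'(s)⟩ ds + 2β ∫₀ᵗ ⟨K u'(s), u'(s)⟩ ds = ⟨M u'(0), u'(0)⟩ + ⟨K u(0), u(0)⟩ + ⟨A φ(0), φ(0)⟩ + 2 ∫₀ᵗ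 ⟨f(s), u'(s)⟩ ds − 2 ∫₀ᵗ ⟨g'(s), φ(s)⟩ ds. -/
open MeasureTheory Matrix Set Filter

lemma hasDerivAt_dot {m : ℕ} {v w : ℝ → Fin m → ℝ} {v₁ w₁ : Fin m → ℝ} {t : ℝ}
    (hv : HasDerivAt v v₁ t) (hw : HasDerivAt w w₁ t) :
    HasDerivAt (fun s => v s ⬝ᵥ w s) (v₁ ⬝ᵥ w t + v t ⬝ᵥ w₁) t := by
  have h : ∀ i ∈ Finset.univ, HasDerivAt (fun s => v s i * w s i)
      (v₁ i * w t i + v t i * w₁ i) t :=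
    fun i _ => (hasDerivAt_pi.1 hv i).mul (hasDerivAt_pi.1 hw i)
  simpa [dotProduct, Finset.sum_add_distrib] using HasDerivAt.fun_sum h

lemma hasDerivAt_mulVec' {m l : ℕ} (M : Matrix (Fin l) (Fin m) ℝ) {v : ℝ → Fin m → ℝ}
    {v₁ : Fin m → ℝ} {t : ℝ} (hv : HasDerivAt v v₁ t) :
    HasDerivAt (fun s => M.mulVec (v s)) (M.mulVec v₁) t := by
  rw [hasDerivAt_pi]
  intro i
  have h : ∀ j ∈ Finset.univ, HasDerivAt (fun s => M i j * v s j) (M i j * v₁ j) t :=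
    fun j _ => (hasDerivAt_pi.1 hv j).const_mul (M i j)
  simpa [Matrix.mulVec, dotProduct] using HasDerivAt.fun_sum h

lemma dot_mulVec_symm {m : ℕ} {M : Matrix (Fin m) (Fin m) ℝ} (hM : Mᵀ = M) (x y : Fin m → ℝ) :
    M.mulVec x ⬝ᵥ y = M.mulVec y ⬝ᵥ x := by
  calc M *ᵥ x ⬝ᵥ y = Mᵀᵀ *ᵥ x ⬝ᵥ y := by rw [Matrix.transpose_transpose]
    _ = (x ᵥ* Mᵀ) ⬝ᵥ y := by rw [Matrix.mulVec_transpose]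
    _ = (x ᵥ* M) ⬝ᵥ y := by rw [hM]
    _ = x ⬝ᵥ (M *ᵥ y) := (Matrix.dotProduct_mulVec x M y).symm
    _ = (M *ᵥ y) ⬝ᵥ x := dotProduct_comm _ _

lemma contOn_dot {m : ℕ} {v w : ℝ → Fin m → ℝ} {s : Set ℝ}
    (hv : ContinuousOn v s) (hw : ContinuousOn w s) :
    ContinuousOn (fun t => v t ⬝ᵥ w t) s :=
  (continuous_fst.dotProduct continuous_snd).comp_continuousOn
    (hv.prodMk hw)

lemma contOn_mulVec {m l : ℕ} (M : Matrix (Fin l) (Fin m) ℝ) {v : ℝ → Fin m → ℝ} {s : Set ℝ}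
    (hv : ContinuousOn v s) : ContinuousOn (fun t => M.mulVec (v t)) s :=
  (continuous_const.matrix_mulVec continuous_id).comp_continuousOn hv


/-- Energy identity (Eq. (160) of the paper) for Galerkin solutions of the discretized
piezoelectric system. -/
theorem piezo_discrete_energy_identity {n k : ℕ}
    (M K : Matrix (Fin n) (Fin n) ℝ) (A : Matrix (Fin k) (Fin k) ℝ)
    (C : Matrix (Fin n) (Fin k) ℝ) (α β : ℝ)
    (hM : M.PosDef) (hK : K.PosSemidef) (hA : A.PosDef)
    (hα : 0 ≤ α) (hβ : 0 ≤ β)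
    (T : ℝ) (hT : 0 < T)
    (f : ℝ → Fin n → ℝ) (hf : Continuous f)
    (g g' : ℝ → Fin k → ℝ) (hg : ∀ t, HasDerivAt g (g' t) t) (hg' : Continuous g')
    (u u' u'' : ℝ → Fin n → ℝ) (φ φ' : ℝ → Fin k → ℝ)
    (hsol : PiezoSolves M K A C α β f g u u' u'' φ (Icc 0 T))
    (hu'' : ContinuousOn u'' (Icc 0 T))
    (hφ : ∀ t ∈ Icc (0 : ℝ) T, HasDerivAt φ (φ' t) t)
    (hφ' : ContinuousOn φ' (Icc 0 T)) :
    ∀ t ∈ Icc (0 : ℝ) T,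
      M.mulVec (u' t) ⬝ᵥ u' t + K.mulVec (u t) ⬝ᵥ u t + A.mulVec (φ t) ⬝ᵥ φ t
        + 2 * α * (∫ s in (0 : ℝ)..t, M.mulVec (u' s) ⬝ᵥ u' s)
        + 2 * β * (∫ s in (0 : ℝ)..t, K.mulVec (u' s) ⬝ᵥ u' s)
      = M.mulVec (u' 0) ⬝ᵥ u' 0 + K.mulVec (u 0) ⬝ᵥ u 0 + A.mulVec (φ 0) ⬝ᵥ φ 0
        + 2 * (∫ s in (0 : ℝ)..t, f s ⬝ᵥ u' s)
        - 2 * (∫ s in (0 : ℝ)..t, g' s ⬝ᵥ φ s) := by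
  obtain ⟨hu, hu', heq1, heq2⟩ := hsol
  have hMsym : Mᵀ = M := by have h : M.IsSymm := by simpa using hM.isHermitian
                            exact h
  have hKsym : Kᵀ = K := by have h : K.IsSymm := by simpa using hK.isHermitian
                            exact h
  have hAsym : Aᵀ = A := by have h : A.IsSymm := by simpa using hA.isHermitian
                            exact h
  -- continuity
  have huc : ContinuousOn u (Icc 0 T) := fun s hs => (hu s hs).continuousAt.continuousWithinAt
  have hu'c : ContinuousOn u' (Icc 0 T) := fun s hs => (hu' s hs).continuousAt.continuousWithinAt
  have hφc : ContinuousOn φ (Icc 0 T) := fun s hs => (hφ s hs).continuousAt.continuousWithinAt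
  set E : ℝ → ℝ := fun s => M.mulVec (u' s) ⬝ᵥ u' s + K.mulVec (u s) ⬝ᵥ u s
      + A.mulVec (φ s) ⬝ᵥ φ s with hE
  set E' : ℝ → ℝ := fun s => 2 * (f s ⬝ᵥ u' s) - 2 * α * (M.mulVec (u' s) ⬝ᵥ u' s)
      - 2 * β * (K.mulVec (u' s) ⬝ᵥ u' s) - 2 * (g' s ⬝ᵥ φ s) with hE'
  have key : ∀ s ∈ Icc (0 : ℝ) T, HasDerivAt E (E' s) s := by
    intro s hs
    have hd : HasDerivAt E
        ((M.mulVec (u'' s) ⬝ᵥ u' s + M.mulVec (u' s) ⬝ᵥ u'' s)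
          + (K.mulVec (u' s) ⬝ᵥ u s + K.mulVec (u s) ⬝ᵥ u' s)
          + (A.mulVec (φ' s) ⬝ᵥ φ s + A.mulVec (φ s) ⬝ᵥ φ' s)) s := by
      exact ((hasDerivAt_dot (hasDerivAt_mulVec' M (hu' s hs)) (hu' s hs)).add
        (hasDerivAt_dot (hasDerivAt_mulVec' K (hu s hs)) (hu s hs))).add
        (hasDerivAt_dot (hasDerivAt_mulVec' A (hφ s hs)) (hφ s hs))
    convert hd using 1
    -- scalar consequences of equation 1
    have eq1s : M.mulVec (u'' s) ⬝ᵥ u' s + α * (M.mulVec (u' s) ⬝ᵥ u' s)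
        + K.mulVec (u s) ⬝ᵥ u' s + β * (K.mulVec (u' s) ⬝ᵥ u' s)
        + C.mulVec (φ s) ⬝ᵥ u' s = f s ⬝ᵥ u' s := by
      have := congrArg (· ⬝ᵥ u' s) (heq1 s hs)
      simpa [add_dotProduct, smul_dotProduct, smul_eq_mul] using this
    -- derivative of equation 2
    have eq2s : Cᵀ.mulVec (u' s) - A.mulVec (φ' s) = g' s := by
      have hW : HasDerivWithinAt (fun r => Cᵀ.mulVec (u r) - A.mulVec (φ r))
          (Cᵀ.mulVec (u' s) - A.mulVec (φ' s)) (Icc 0 T) s :=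
        ((hasDerivAt_mulVec' Cᵀ (hu s hs)).sub (hasDerivAt_mulVec' A (hφ s hs))).hasDerivWithinAt
      have hW2 : HasDerivWithinAt g (Cᵀ.mulVec (u' s) - A.mulVec (φ' s)) (Icc 0 T) s :=
        hW.congr (fun r hr => (heq2 r hr).symm) (heq2 s hs).symm
      have hud : UniqueDiffWithinAt ℝ (Icc (0 : ℝ) T) s := (uniqueDiffOn_Icc hT) s hs
      exact (hW2.derivWithin hud).symm.trans (((hg s).hasDerivWithinAt).derivWithin hud)
    have eq2dot : Cᵀ.mulVec (u' s) ⬝ᵥ φ s - A.mulVec (φ' s) ⬝ᵥ φ s = g' s ⬝ᵥ φ s := by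
      have := congrArg (· ⬝ᵥ φ s) eq2s
      simpa [sub_dotProduct] using this
    have cross : Cᵀ.mulVec (u' s) ⬝ᵥ φ s = C.mulVec (φ s) ⬝ᵥ u' s := by
      rw [Matrix.mulVec_transpose, ← Matrix.dotProduct_mulVec]
      exact dotProduct_comm _ _
    have s1 : M.mulVec (u' s) ⬝ᵥ u'' s = M.mulVec (u'' s) ⬝ᵥ u' s := dot_mulVec_symm hMsym _ _
    have s2 : K.mulVec (u' s) ⬝ᵥ u s = K.mulVec (u s) ⬝ᵥ u' s := dot_mulVec_symm hKsym _ _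
    have s3 : A.mulVec (φ s) ⬝ᵥ φ' s = A.mulVec (φ' s) ⬝ᵥ φ s := dot_mulVec_symm hAsym _ _
    simp only [hE']
    linarith [eq1s, eq2dot, cross, s1, s2, s3]
  intro t ht
  have ht0 : (0 : ℝ) ≤ t := ht.1
  have hsub : Icc (0 : ℝ) t ⊆ Icc 0 T := Icc_subset_Icc le_rfl ht.2
  have huIcc : uIcc (0 : ℝ) t = Icc 0 t := uIcc_of_le ht0
  -- integrability of pieces
  have hMc : ContinuousOn (fun s => M.mulVec (u' s) ⬝ᵥ u' s) (Icc 0 T) :=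
    contOn_dot (contOn_mulVec M hu'c) hu'c
  have hKc : ContinuousOn (fun s => K.mulVec (u' s) ⬝ᵥ u' s) (Icc 0 T) :=
    contOn_dot (contOn_mulVec K hu'c) hu'c
  have hfc : ContinuousOn (fun s => f s ⬝ᵥ u' s) (Icc 0 T) :=
    contOn_dot hf.continuousOn hu'c
  have hgc : ContinuousOn (fun s => g' s ⬝ᵥ φ s) (Icc 0 T) :=
    contOn_dot hg'.continuousOn hφc
  have iM : IntervalIntegrable (fun s => M.mulVec (u' s) ⬝ᵥ u' s) volume 0 t :=
    ((hMc.mono (huIcc ▸ hsub)).intervalIntegrable)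
  have iK : IntervalIntegrable (fun s => K.mulVec (u' s) ⬝ᵥ u' s) volume 0 t :=
    ((hKc.mono (huIcc ▸ hsub)).intervalIntegrable)
  have iF : IntervalIntegrable (fun s => f s ⬝ᵥ u' s) volume 0 t :=
    ((hfc.mono (huIcc ▸ hsub)).intervalIntegrable)
  have iG : IntervalIntegrable (fun s => g' s ⬝ᵥ φ s) volume 0 t :=
    ((hgc.mono (huIcc ▸ hsub)).intervalIntegrable)
  have hE'c : ContinuousOn E' (Icc 0 T) := by
    exact (((continuousOn_const.mul hfc).sub ((continuousOn_const.mul hMc))).sub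
      (continuousOn_const.mul hKc)).sub (continuousOn_const.mul hgc)
  have hftc : (∫ s in (0 : ℝ)..t, E' s) = E t - E 0 :=
    intervalIntegral.integral_eq_sub_of_hasDerivAt
      (fun s hs => key s (hsub (huIcc ▸ hs)))
      ((hE'c.mono (huIcc ▸ hsub)).intervalIntegrable)
  have hsplit : (∫ s in (0 : ℝ)..t, E' s)
      = 2 * (∫ s in (0 : ℝ)..t, f s ⬝ᵥ u' s)
        - 2 * α * (∫ s in (0 : ℝ)..t, M.mulVec (u' s) ⬝ᵥ u' s)
        - 2 * β * (∫ s in (0 : ℝ)..t, K.mulVec (u' s) ⬝ᵥ u' s)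
        - 2 * (∫ s in (0 : ℝ)..t, g' s ⬝ᵥ φ s) := by
    rw [hE']
    rw [intervalIntegral.integral_sub (((iF.const_mul 2).sub (iM.const_mul (2 * α))).sub
        (iK.const_mul (2 * β))) (iG.const_mul 2),
      intervalIntegral.integral_sub ((iF.const_mul 2).sub (iM.const_mul (2 * α)))
        (iK.const_mul (2 * β)),
      intervalIntegral.integral_sub (iF.const_mul 2) (iM.const_mul (2 * α)),
      intervalIntegral.integral_const_mul, intervalIntegral.integral_const_mul,
      intervalIntegral.integral_const_mul, intervalIntegral.integral_const_mul]
  have hEt : E t - E 0 = 2 * (∫ s in (0 : ℝ)..t, f s ⬝ᵥ u' s)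
        - 2 * α * (∫ s in (0 : ℝ)..t, M.mulVec (u' s) ⬝ᵥ u' s)
        - 2 * β * (∫ s in (0 : ℝ)..t, K.mulVec (u' s) ⬝ᵥ u' s)
        - 2 * (∫ s in (0 : ℝ)..t, g' s ⬝ᵥ φ s) := by rw [← hftc, hsplit]
  simp only [hE] at hEt
  linarith [hEt]
end

section
/- Under the discretized (Galerkin) piezoelectric setting: let T > 0 and let (u, φ) solve the discretized piezoelectric system on [0, T] with forcing f ≡ 0 and g ≡ 0, with u twice continuously differentiable and φ continuous, and with homogeneous initial data u(0) = 0 and u'(0) = 0. Then u(t) = 0 and φ(t) = 0 for all t ∈ [0, T]. -/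
open MeasureTheory Matrix Set Filter

lemma my_hasDerivAt_dot {p q : ℕ} (B : Matrix (Fin p) (Fin q) ℝ)
    {v : ℝ → Fin p → ℝ} {w : ℝ → Fin q → ℝ} {v' : Fin p → ℝ} {w' : Fin q → ℝ} {t : ℝ}
    (hv : HasDerivAt v v' t) (hw : HasDerivAt w w' t) :
    HasDerivAt (fun s => v s ⬝ᵥ B *ᵥ w s) (v' ⬝ᵥ B *ᵥ w t + v t ⬝ᵥ B *ᵥ w') t := by
  have hvi := hasDerivAt_pi.1 hv
  have hwi := hasDerivAt_pi.1 hw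
  have key : ∀ i : Fin p, HasDerivAt (fun s => v s i * ∑ j, B i j * w s j)
      (v' i * (∑ j, B i j * w t j) + v t i * ∑ j, B i j * w' j) t := fun i =>
    (hvi i).mul (HasDerivAt.fun_sum fun j _ => (hwi j).const_mul (B i j))
  have := HasDerivAt.fun_sum (fun i (_ : i ∈ Finset.univ) => key i)
  refine this.congr_deriv ?_
  simp [dotProduct, mulVec, Finset.sum_add_distrib]

lemma my_dot_symm {p : ℕ} {S : Matrix (Fin p) (Fin p) ℝ} (hS : Sᵀ = S)
    (x y : Fin p → ℝ) : x ⬝ᵥ S *ᵥ y = y ⬝ᵥ S *ᵥ x := by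
  simp only [dotProduct, mulVec, Finset.mul_sum]
  rw [Finset.sum_comm]
  refine Finset.sum_congr rfl fun i _ => Finset.sum_congr rfl fun j _ => ?_
  have h := congrFun (congrFun hS i) j
  rw [transpose_apply] at h
  rw [h]; ring

lemma my_dot_trans {p q : ℕ} (C : Matrix (Fin p) (Fin q) ℝ)
    (x : Fin q → ℝ) (y : Fin p → ℝ) : x ⬝ᵥ Cᵀ *ᵥ y = y ⬝ᵥ C *ᵥ x := by
  simp only [dotProduct, mulVec, Finset.mul_sum, transpose_apply]
  rw [Finset.sum_comm]
  exact Finset.sum_congr rfl fun i _ => Finset.sum_congr rfl fun j _ => by ring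


/-- Uniqueness (Phase 4 of Theorem 1) at the Galerkin level: the only solution of the
discretized piezoelectric system with zero forcing and homogeneous initial data is the
trivial one. -/
theorem piezo_discrete_uniqueness {n k : ℕ}
    (M K : Matrix (Fin n) (Fin n) ℝ) (A : Matrix (Fin k) (Fin k) ℝ)
    (C : Matrix (Fin n) (Fin k) ℝ) (α β : ℝ)
    (hM : M.PosDef) (hK : K.PosSemidef) (hA : A.PosDef)
    (hα : 0 ≤ α) (hβ : 0 ≤ β)
    (T : ℝ) (hT : 0 < T)
    (u u' u'' : ℝ → Fin n → ℝ) (φ : ℝ → Fin k → ℝ)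
    (hsol : PiezoSolves M K A C α β (fun _ => 0) (fun _ => 0) u u' u'' φ (Icc 0 T))
    (hu'' : ContinuousOn u'' (Icc 0 T)) (hφ : ContinuousOn φ (Icc 0 T))
    (h0 : u 0 = 0) (h1 : u' 0 = 0) :
    ∀ t ∈ Icc (0 : ℝ) T, u t = 0 ∧ φ t = 0 := by
  obtain ⟨hd1, hd2, heq1, heq2⟩ := hsol
  have hMs : Mᵀ = M := by simpa [Matrix.IsSymm] using hM.1
  have hKs : Kᵀ = K := by simpa [Matrix.IsSymm] using hK.1
  have hAs : Aᵀ = A := by simpa [Matrix.IsSymm] using hA.1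
  have hMnn : ∀ x, 0 ≤ x ⬝ᵥ M *ᵥ x := fun x => by
    simpa using hM.posSemidef.re_dotProduct_nonneg x
  have hKnn : ∀ x, 0 ≤ x ⬝ᵥ K *ᵥ x := fun x => by
    simpa using hK.re_dotProduct_nonneg x
  have hAnn : ∀ x, 0 ≤ x ⬝ᵥ A *ᵥ x := fun x => by
    simpa using hA.posSemidef.re_dotProduct_nonneg x
  have hAdet : IsUnit A.det := hA.det_pos.ne'.isUnit
  set B : Matrix (Fin k) (Fin n) ℝ := A⁻¹ * Cᵀ with hBdef
  have hAB : ∀ x, A *ᵥ (B *ᵥ x) = Cᵀ *ᵥ x := fun x => by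
    rw [Matrix.mulVec_mulVec, hBdef, ← Matrix.mul_assoc,
      Matrix.mul_nonsing_inv _ hAdet, Matrix.one_mul]
  have hAinj : ∀ x y : Fin k → ℝ, A *ᵥ x = A *ᵥ y → x = y := by
    intro x y hxy
    have h2 : ∀ z : Fin k → ℝ, A⁻¹ *ᵥ (A *ᵥ z) = z := fun z => by
      rw [Matrix.mulVec_mulVec, Matrix.nonsing_inv_mul _ hAdet, Matrix.one_mulVec]
    rw [← h2 x, ← h2 y, hxy]
  set ψ : ℝ → Fin k → ℝ := fun s => B *ᵥ u s with hψdef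
  set ψ' : ℝ → Fin k → ℝ := fun s => B *ᵥ u' s with hψ'def
  have hφψ : ∀ t ∈ Icc (0:ℝ) T, φ t = ψ t := by
    intro t ht
    have h : Cᵀ *ᵥ u t - A *ᵥ φ t = 0 := heq2 t ht
    have h2 : A *ᵥ φ t = A *ᵥ ψ t := by
      rw [hAB (u t)]
      exact (sub_eq_zero.mp h).symm
    exact hAinj _ _ h2
  have hψd : ∀ t ∈ Icc (0:ℝ) T, HasDerivAt ψ (ψ' t) t := by
    intro t ht
    refine hasDerivAt_pi.2 fun i => ?_
    have h : HasDerivAt (fun s => ∑ j, B i j * u s j) (∑ j, B i j * u' t j) t :=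
      HasDerivAt.fun_sum fun j _ => ((hasDerivAt_pi.1 (hd1 t ht)) j).const_mul _
    simpa [hψdef, hψ'def, mulVec, dotProduct] using h
  set E : ℝ → ℝ := fun s => u' s ⬝ᵥ M *ᵥ u' s + u s ⬝ᵥ K *ᵥ u s + ψ s ⬝ᵥ A *ᵥ ψ s with hEdef
  have hEderiv : ∀ t ∈ Icc (0:ℝ) T,
      HasDerivAt E (-(2*α) * (u' t ⬝ᵥ M *ᵥ u' t) + -(2*β) * (u' t ⬝ᵥ K *ᵥ u' t)) t := by
    intro t ht
    have h1 := my_hasDerivAt_dot M (hd2 t ht) (hd2 t ht)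
    have h2 := my_hasDerivAt_dot K (hd1 t ht) (hd1 t ht)
    have h3 := my_hasDerivAt_dot A (hψd t ht) (hψd t ht)
    have hsum := (h1.add h2).add h3
    refine hsum.congr_deriv ?_
    have e1 := congrArg (fun x => u' t ⬝ᵥ x) (heq1 t ht)
    simp only [dotProduct_add, dotProduct_smul, smul_eq_mul, dotProduct_zero] at e1
    have e1' : u' t ⬝ᵥ M *ᵥ u'' t + α * (u' t ⬝ᵥ M *ᵥ u' t) + u' t ⬝ᵥ K *ᵥ u t
        + β * (u' t ⬝ᵥ K *ᵥ u' t) + u' t ⬝ᵥ C *ᵥ ψ t = 0 := by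
      rw [← hφψ t ht]
      simpa [dotProduct] using e1
    have r1 : u'' t ⬝ᵥ M *ᵥ u' t = u' t ⬝ᵥ M *ᵥ u'' t := my_dot_symm hMs _ _
    have r2 : u' t ⬝ᵥ K *ᵥ u t = u t ⬝ᵥ K *ᵥ u' t := my_dot_symm hKs _ _
    have r3 : ψ' t ⬝ᵥ A *ᵥ ψ t = ψ t ⬝ᵥ A *ᵥ ψ' t := my_dot_symm hAs _ _
    have r4 : ψ t ⬝ᵥ A *ᵥ ψ' t = u' t ⬝ᵥ C *ᵥ ψ t := by
      rw [show A *ᵥ ψ' t = Cᵀ *ᵥ u' t from hAB _, my_dot_trans]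
    rw [r1, r3, r4]
    rw [r2] at e1'
    linarith
  have contE : ContinuousOn E (Icc 0 T) := fun t ht =>
    (hEderiv t ht).continuousAt.continuousWithinAt
  have diffE : DifferentiableOn ℝ E (interior (Icc 0 T)) := by
    rw [interior_Icc]
    exact fun t ht => (hEderiv t (Ioo_subset_Icc_self ht)).differentiableAt.differentiableWithinAt
  have derivnp : ∀ t ∈ interior (Icc (0:ℝ) T), deriv E t ≤ 0 := by
    rw [interior_Icc]
    intro t ht
    rw [(hEderiv t (Ioo_subset_Icc_self ht)).deriv]
    have := hMnn (u' t); have := hKnn (u' t)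
    nlinarith
  have hAnti : AntitoneOn E (Icc 0 T) :=
    antitoneOn_of_deriv_nonpos (convex_Icc 0 T) contE diffE derivnp
  have hE0 : E 0 = 0 := by simp [hEdef, hψdef, h0, h1, Matrix.mulVec_zero, dotProduct_zero]
  have hEle : ∀ t ∈ Icc (0:ℝ) T, E t ≤ 0 := fun t ht =>
    (hAnti (left_mem_Icc.2 hT.le) ht ht.1).trans_eq hE0
  have hu'0 : ∀ t ∈ Icc (0:ℝ) T, u' t = 0 := by
    intro t ht
    by_contra hx
    have hpos : 0 < u' t ⬝ᵥ M *ᵥ u' t := by simpa using hM.re_dotProduct_pos hx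
    have h2 := hKnn (u t); have h3 := hAnn (ψ t)
    have h4 : u' t ⬝ᵥ M *ᵥ u' t + u t ⬝ᵥ K *ᵥ u t + ψ t ⬝ᵥ A *ᵥ ψ t ≤ 0 := hEle t ht
    linarith
  have hcu : ContinuousOn u (Icc 0 T) := fun t ht =>
    (hd1 t ht).continuousAt.continuousWithinAt
  have huconst : ∀ i : Fin n, ∀ t ∈ Icc (0:ℝ) T, u t i = u 0 i := by
    intro i
    refine constant_of_has_deriv_right_zero ((continuous_apply i).comp_continuousOn hcu) ?_
    intro x hx
    have h := (hasDerivAt_pi.1 (hd1 x (Ico_subset_Icc_self hx))) i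
    rw [hu'0 x (Ico_subset_Icc_self hx)] at h
    exact h.hasDerivWithinAt
  intro t ht
  have hut : u t = 0 := by
    funext i
    rw [huconst i t ht, h0]
  refine ⟨hut, ?_⟩
  rw [hφψ t ht, hψdef]
  simp [hut, Matrix.mulVec_zero]
end

section
/- Under the discretized (Galerkin) piezoelectric setting: let T > 0, let f : ℝ → ℝⁿ be continuously differentiable, let g : ℝ → ℝᵏ be twice continuously differentiable, and let (u, φ) solve the discretized piezoelectric system on [0, T] with u three times continuously differentiable and φ twice continuously differentiable. Then for every t ∈ [0, T] the differentiated energy identity holds: ⟨M u''(t), u''(t)⟩ + ⟨K u'(t), u'(t)⟩ + ⟨A φ'(t), φ'(t)⟩ + 2α ∫₀ᵗ ⟨M u''(s), u''(s)⟩ ds + 2β ∫₀ᵗ ⟨K u''(s), u''(s)⟩ ds = ⟨M u''(0), u''(0)⟩ + ⟨K u'(0), u'(0)⟩ + ⟨A φ'(0), φ'(0)⟩ + 2 ∫₀ᵗ ⟨f'(s), u''(s)⟩ ds − 2 ∫₀ᵗ ⟨g''(s), φ'(s)⟩ ds. -/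
open MeasureTheory Matrix Set Filter

section Aux

variable {m l : ℕ}

lemma piezoAux_hasDerivAt_mulVec (B : Matrix (Fin m) (Fin l) ℝ) {v : ℝ → Fin l → ℝ}
    {vd : Fin l → ℝ} {t : ℝ} (hv : HasDerivAt v vd t) :
    HasDerivAt (fun s => B.mulVec (v s)) (B.mulVec vd) t := by
  rw [hasDerivAt_pi] at hv ⊢
  intro i
  simp only [Matrix.mulVec, dotProduct]
  exact HasDerivAt.fun_sum fun j _ => (hv j).const_mul (B i j)

lemma piezoAux_hasDerivAt_dot {v w : ℝ → Fin m → ℝ} {vd wd : Fin m → ℝ} {t : ℝ}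
    (hv : HasDerivAt v vd t) (hw : HasDerivAt w wd t) :
    HasDerivAt (fun s => v s ⬝ᵥ w s) (vd ⬝ᵥ w t + v t ⬝ᵥ wd) t := by
  rw [hasDerivAt_pi] at hv hw
  simp only [dotProduct, ← Finset.sum_add_distrib]
  exact HasDerivAt.fun_sum fun i _ => (hv i).mul (hw i)

lemma piezoAux_contOn_dot {v w : ℝ → Fin m → ℝ} {s : Set ℝ}
    (hv : ContinuousOn v s) (hw : ContinuousOn w s) :
    ContinuousOn (fun t => v t ⬝ᵥ w t) s := by
  simp only [dotProduct]
  exact continuousOn_finset_sum _ fun i _ =>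
    (((continuous_apply i).comp_continuousOn hv).mul
      ((continuous_apply i).comp_continuousOn hw))

lemma piezoAux_contOn_mulVec (B : Matrix (Fin m) (Fin l) ℝ) {v : ℝ → Fin l → ℝ} {s : Set ℝ}
    (hv : ContinuousOn v s) : ContinuousOn (fun t => B.mulVec (v t)) s := by
  apply continuousOn_pi.mpr
  intro i
  simp only [Matrix.mulVec, dotProduct]
  exact continuousOn_finset_sum _ fun j _ =>
    (continuousOn_const.mul ((continuous_apply j).comp_continuousOn hv))

lemma piezoAux_mulVec_dot (B : Matrix (Fin m) (Fin l) ℝ) (v : Fin l → ℝ) (w : Fin m → ℝ) :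
    B.mulVec v ⬝ᵥ w = v ⬝ᵥ Bᵀ.mulVec w := by
  rw [dotProduct_mulVec, vecMul_transpose, dotProduct_comm]

lemma piezoAux_sym_dot {B : Matrix (Fin m) (Fin m) ℝ} (hB : Bᵀ = B) (v w : Fin m → ℝ) :
    B.mulVec v ⬝ᵥ w = B.mulVec w ⬝ᵥ v := by
  rw [piezoAux_mulVec_dot, hB, dotProduct_comm]

end Aux

/-- Differentiated energy identity (Eq. (160_neu)) for Galerkin solutions: the core of
the higher-regularity Theorem 2 at the discretized level. -/
theorem piezo_discrete_energy_identity_diff {n k : ℕ}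
    (M K : Matrix (Fin n) (Fin n) ℝ) (A : Matrix (Fin k) (Fin k) ℝ)
    (C : Matrix (Fin n) (Fin k) ℝ) (α β : ℝ)
    (hM : M.PosDef) (hK : K.PosSemidef) (hA : A.PosDef)
    (hα : 0 ≤ α) (hβ : 0 ≤ β)
    (T : ℝ) (hT : 0 < T)
    (f f' : ℝ → Fin n → ℝ) (hf : ∀ t, HasDerivAt f (f' t) t) (hf' : Continuous f')
    (g g' g'' : ℝ → Fin k → ℝ)
    (hg : ∀ t, HasDerivAt g (g' t) t) (hg' : ∀ t, HasDerivAt g' (g'' t) t)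
    (hg'' : Continuous g'')
    (u u' u'' u''' : ℝ → Fin n → ℝ) (φ φ' φ'' : ℝ → Fin k → ℝ)
    (hsol : PiezoSolves M K A C α β f g u u' u'' φ (Icc 0 T))
    (hu''' : ∀ t ∈ Icc (0 : ℝ) T, HasDerivAt u'' (u''' t) t)
    (hu'''c : ContinuousOn u''' (Icc 0 T))
    (hφ' : ∀ t ∈ Icc (0 : ℝ) T, HasDerivAt φ (φ' t) t)
    (hφ'' : ∀ t ∈ Icc (0 : ℝ) T, HasDerivAt φ' (φ'' t) t)
    (hφ''c : ContinuousOn φ'' (Icc 0 T)) :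
    ∀ t ∈ Icc (0 : ℝ) T,
      M.mulVec (u'' t) ⬝ᵥ u'' t + K.mulVec (u' t) ⬝ᵥ u' t + A.mulVec (φ' t) ⬝ᵥ φ' t
        + 2 * α * (∫ s in (0 : ℝ)..t, M.mulVec (u'' s) ⬝ᵥ u'' s)
        + 2 * β * (∫ s in (0 : ℝ)..t, K.mulVec (u'' s) ⬝ᵥ u'' s)
      = M.mulVec (u'' 0) ⬝ᵥ u'' 0 + K.mulVec (u' 0) ⬝ᵥ u' 0 + A.mulVec (φ' 0) ⬝ᵥ φ' 0
        + 2 * (∫ s in (0 : ℝ)..t, f' s ⬝ᵥ u'' s)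
        - 2 * (∫ s in (0 : ℝ)..t, g'' s ⬝ᵥ φ' s) := by
  obtain ⟨hu, hu', heq1, heq2⟩ := hsol
  have hMs : Mᵀ = M := hM.1
  have hKs : Kᵀ = K := hK.1
  have hAs : Aᵀ = A := hA.1
  have hud : ∀ t ∈ Icc (0:ℝ) T, UniqueDiffWithinAt ℝ (Icc (0:ℝ) T) t :=
    fun t ht => uniqueDiffOn_Icc hT t ht
  -- differentiated first equation
  have eq1' : ∀ t ∈ Icc (0:ℝ) T,
      M.mulVec (u''' t) + α • M.mulVec (u'' t) + K.mulVec (u' t)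
        + β • K.mulVec (u'' t) + C.mulVec (φ' t) = f' t := by
    intro t ht
    have hF : HasDerivAt (fun s => M.mulVec (u'' s) + α • M.mulVec (u' s) + K.mulVec (u s)
        + β • K.mulVec (u' s) + C.mulVec (φ s))
        (M.mulVec (u''' t) + α • M.mulVec (u'' t) + K.mulVec (u' t)
          + β • K.mulVec (u'' t) + C.mulVec (φ' t)) t :=
      ((((piezoAux_hasDerivAt_mulVec M (hu''' t ht)).add
        ((piezoAux_hasDerivAt_mulVec M (hu' t ht)).const_smul α)).add
        (piezoAux_hasDerivAt_mulVec K (hu t ht))).add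
        ((piezoAux_hasDerivAt_mulVec K (hu' t ht)).const_smul β)).add
        (piezoAux_hasDerivAt_mulVec C (hφ' t ht))
    have h1 : HasDerivWithinAt f
        (M.mulVec (u''' t) + α • M.mulVec (u'' t) + K.mulVec (u' t)
          + β • K.mulVec (u'' t) + C.mulVec (φ' t)) (Icc 0 T) t :=
      hF.hasDerivWithinAt.congr (fun s hs => (heq1 s hs).symm) (heq1 t ht).symm
    exact (h1.derivWithin (hud t ht)).symm.trans ((hf t).hasDerivWithinAt.derivWithin (hud t ht))
  -- differentiated second equation (twice)
  have eq2' : ∀ t ∈ Icc (0:ℝ) T,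
      Cᵀ.mulVec (u' t) - A.mulVec (φ' t) = g' t := by
    intro t ht
    have hF : HasDerivAt (fun s => Cᵀ.mulVec (u s) - A.mulVec (φ s))
        (Cᵀ.mulVec (u' t) - A.mulVec (φ' t)) t :=
      (piezoAux_hasDerivAt_mulVec Cᵀ (hu t ht)).sub (piezoAux_hasDerivAt_mulVec A (hφ' t ht))
    have h1 : HasDerivWithinAt g (Cᵀ.mulVec (u' t) - A.mulVec (φ' t)) (Icc 0 T) t :=
      hF.hasDerivWithinAt.congr (fun s hs => (heq2 s hs).symm) (heq2 t ht).symm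
    exact (h1.derivWithin (hud t ht)).symm.trans ((hg t).hasDerivWithinAt.derivWithin (hud t ht))
  have eq2'' : ∀ t ∈ Icc (0:ℝ) T,
      Cᵀ.mulVec (u'' t) - A.mulVec (φ'' t) = g'' t := by
    intro t ht
    have hF : HasDerivAt (fun s => Cᵀ.mulVec (u' s) - A.mulVec (φ' s))
        (Cᵀ.mulVec (u'' t) - A.mulVec (φ'' t)) t :=
      (piezoAux_hasDerivAt_mulVec Cᵀ (hu' t ht)).sub (piezoAux_hasDerivAt_mulVec A (hφ'' t ht))
    have h1 : HasDerivWithinAt g' (Cᵀ.mulVec (u'' t) - A.mulVec (φ'' t)) (Icc 0 T) t :=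
      hF.hasDerivWithinAt.congr (fun s hs => (eq2' s hs).symm) (eq2' t ht).symm
    exact (h1.derivWithin (hud t ht)).symm.trans ((hg' t).hasDerivWithinAt.derivWithin (hud t ht))
  -- energy derivative
  set E : ℝ → ℝ := fun s =>
    M.mulVec (u'' s) ⬝ᵥ u'' s + K.mulVec (u' s) ⬝ᵥ u' s + A.mulVec (φ' s) ⬝ᵥ φ' s with hEdef
  set e : ℝ → ℝ := fun s =>
    2 * (f' s ⬝ᵥ u'' s) - 2 * (g'' s ⬝ᵥ φ' s)
      - 2 * α * (M.mulVec (u'' s) ⬝ᵥ u'' s) - 2 * β * (K.mulVec (u'' s) ⬝ᵥ u'' s) with hedef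
  have hE : ∀ s ∈ Icc (0:ℝ) T, HasDerivAt E (e s) s := by
    intro s hs
    have h : HasDerivAt E
        ((M.mulVec (u''' s) ⬝ᵥ u'' s + M.mulVec (u'' s) ⬝ᵥ u''' s)
          + (K.mulVec (u'' s) ⬝ᵥ u' s + K.mulVec (u' s) ⬝ᵥ u'' s)
          + (A.mulVec (φ'' s) ⬝ᵥ φ' s + A.mulVec (φ' s) ⬝ᵥ φ'' s)) s :=
      ((piezoAux_hasDerivAt_dot (piezoAux_hasDerivAt_mulVec M (hu''' s hs)) (hu''' s hs)).add
        (piezoAux_hasDerivAt_dot (piezoAux_hasDerivAt_mulVec K (hu' s hs)) (hu' s hs))).add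
        (piezoAux_hasDerivAt_dot (piezoAux_hasDerivAt_mulVec A (hφ'' s hs)) (hφ'' s hs))
    convert h using 1
    have hM3 : M.mulVec (u''' s) = f' s - α • M.mulVec (u'' s) - K.mulVec (u' s)
        - β • K.mulVec (u'' s) - C.mulVec (φ' s) := by
      rw [← eq1' s hs]; abel
    have hC2 : Cᵀ.mulVec (u'' s) = A.mulVec (φ'' s) + g'' s := by
      rw [← eq2'' s hs]; abel
    have hswap1 : M.mulVec (u'' s) ⬝ᵥ u''' s = M.mulVec (u''' s) ⬝ᵥ u'' s :=
      piezoAux_sym_dot hMs _ _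
    have hswap2 : K.mulVec (u'' s) ⬝ᵥ u' s = K.mulVec (u' s) ⬝ᵥ u'' s :=
      piezoAux_sym_dot hKs _ _
    have hswap3 : A.mulVec (φ' s) ⬝ᵥ φ'' s = A.mulVec (φ'' s) ⬝ᵥ φ' s :=
      piezoAux_sym_dot hAs _ _
    have hCphi : C.mulVec (φ' s) ⬝ᵥ u'' s = A.mulVec (φ'' s) ⬝ᵥ φ' s + g'' s ⬝ᵥ φ' s := by
      rw [piezoAux_mulVec_dot, hC2, dotProduct_add, dotProduct_comm, dotProduct_comm (φ' s)]
    rw [hswap1, hswap2, hswap3, hM3]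
    simp only [sub_dotProduct, smul_dotProduct, smul_eq_mul, hCphi]
    ring
  -- continuity
  have u''c : ContinuousOn u'' (Icc (0:ℝ) T) :=
    fun s hs => (hu''' s hs).continuousAt.continuousWithinAt
  have u'c : ContinuousOn u' (Icc (0:ℝ) T) :=
    fun s hs => (hu' s hs).continuousAt.continuousWithinAt
  have φ'c : ContinuousOn φ' (Icc (0:ℝ) T) :=
    fun s hs => (hφ'' s hs).continuousAt.continuousWithinAt
  have cMu : ContinuousOn (fun s => M.mulVec (u'' s) ⬝ᵥ u'' s) (Icc (0:ℝ) T) :=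
    piezoAux_contOn_dot (piezoAux_contOn_mulVec M u''c) u''c
  have cKu : ContinuousOn (fun s => K.mulVec (u'' s) ⬝ᵥ u'' s) (Icc (0:ℝ) T) :=
    piezoAux_contOn_dot (piezoAux_contOn_mulVec K u''c) u''c
  have cfu : ContinuousOn (fun s => f' s ⬝ᵥ u'' s) (Icc (0:ℝ) T) :=
    piezoAux_contOn_dot hf'.continuousOn u''c
  have cgφ : ContinuousOn (fun s => g'' s ⬝ᵥ φ' s) (Icc (0:ℝ) T) :=
    piezoAux_contOn_dot hg''.continuousOn φ'c
  -- main computation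
  intro t ht
  obtain ⟨ht0, htT⟩ := ht
  have hsub : Icc (0:ℝ) t ⊆ Icc 0 T := Icc_subset_Icc le_rfl htT
  have huIcc : uIcc (0:ℝ) t = Icc 0 t := uIcc_of_le ht0
  have iMu : IntervalIntegrable (fun s => M.mulVec (u'' s) ⬝ᵥ u'' s) volume 0 t :=
    ContinuousOn.intervalIntegrable (by rw [huIcc]; exact cMu.mono hsub)
  have iKu : IntervalIntegrable (fun s => K.mulVec (u'' s) ⬝ᵥ u'' s) volume 0 t :=
    ContinuousOn.intervalIntegrable (by rw [huIcc]; exact cKu.mono hsub)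
  have ifu : IntervalIntegrable (fun s => f' s ⬝ᵥ u'' s) volume 0 t :=
    ContinuousOn.intervalIntegrable (by rw [huIcc]; exact cfu.mono hsub)
  have igφ : IntervalIntegrable (fun s => g'' s ⬝ᵥ φ' s) volume 0 t :=
    ContinuousOn.intervalIntegrable (by rw [huIcc]; exact cgφ.mono hsub)
  have ie : IntervalIntegrable e volume 0 t := by
    have : ContinuousOn e (Icc (0:ℝ) T) := by
      apply ContinuousOn.sub; apply ContinuousOn.sub; apply ContinuousOn.sub
      · exact continuousOn_const.mul cfu
      · exact continuousOn_const.mul cgφ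
      · exact continuousOn_const.mul cMu
      · exact continuousOn_const.mul cKu
    exact ContinuousOn.intervalIntegrable (by rw [huIcc]; exact this.mono hsub)
  have key : (∫ s in (0:ℝ)..t, e s) = E t - E 0 :=
    intervalIntegral.integral_eq_sub_of_hasDerivAt
      (fun s hs => hE s (hsub (huIcc ▸ hs))) ie
  have hsplit : (∫ s in (0:ℝ)..t, e s)
      = 2 * (∫ s in (0:ℝ)..t, f' s ⬝ᵥ u'' s) - 2 * (∫ s in (0:ℝ)..t, g'' s ⬝ᵥ φ' s)
        - 2 * α * (∫ s in (0:ℝ)..t, M.mulVec (u'' s) ⬝ᵥ u'' s)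
        - 2 * β * (∫ s in (0:ℝ)..t, K.mulVec (u'' s) ⬝ᵥ u'' s) := by
    rw [hedef]
    rw [intervalIntegral.integral_sub (((ifu.const_mul 2).sub (igφ.const_mul 2)).sub
      (iMu.const_mul (2*α))) (iKu.const_mul (2*β)),
      intervalIntegral.integral_sub ((ifu.const_mul 2).sub (igφ.const_mul 2))
        (iMu.const_mul (2*α)),
      intervalIntegral.integral_sub (ifu.const_mul 2) (igφ.const_mul 2),
      intervalIntegral.integral_const_mul, intervalIntegral.integral_const_mul,
      intervalIntegral.integral_const_mul, intervalIntegral.integral_const_mul]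
  have hE0 : E 0 = M.mulVec (u'' 0) ⬝ᵥ u'' 0 + K.mulVec (u' 0) ⬝ᵥ u' 0
      + A.mulVec (φ' 0) ⬝ᵥ φ' 0 := rfl
  have hEt : E t = M.mulVec (u'' t) ⬝ᵥ u'' t + K.mulVec (u' t) ⬝ᵥ u' t
      + A.mulVec (φ' t) ⬝ᵥ φ' t := rfl
  rw [hsplit] at key
  linarith [key]
end

section
/- Under the discretized (Galerkin) piezoelectric setting with strictly positive damping parameters α > 0 and β > 0: let t₀ ≥ 0, let f : ℝ → ℝⁿ be continuous and g : ℝ → ℝᵏ be continuously differentiable with f(t) = 0 and g(t) = 0 for all t ≥ t₀, and let (u, φ) solve the discretized piezoelectric system on [0, ∞) with u twice continuously differentiable and φ continuously differentiable. Then ∫_{t₀}^∞ ⟨M u'(s), u'(s)⟩ ds < ∞ and ∫_{t₀}^∞ ⟨K u'(s), u'(s)⟩ ds < ∞. -/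
open MeasureTheory Matrix Set Filter

lemma hasDerivAt_quad {n : ℕ} (M : Matrix (Fin n) (Fin n) ℝ)
    (v : ℝ → Fin n → ℝ) (w : Fin n → ℝ) (t : ℝ) (hv : HasDerivAt v w t) :
    HasDerivAt (fun s => M.mulVec (v s) ⬝ᵥ v s)
      (M.mulVec w ⬝ᵥ v t + M.mulVec (v t) ⬝ᵥ w) t := by
  have hvi : ∀ i, HasDerivAt (fun s => v s i) (w i) t := fun i => hasDerivAt_pi.mp hv i
  have key : HasDerivAt (fun s => ∑ i, (∑ j, M i j * v s j) * v s i)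
      (∑ i, ((∑ j, M i j * w j) * v t i + (∑ j, M i j * v t j) * w i)) t := by
    apply HasDerivAt.fun_sum
    intro i _
    exact ((HasDerivAt.fun_sum fun j _ => (hvi j).const_mul (M i j)).mul (hvi i))
  convert key using 1
  all_goals simp [mulVec, dotProduct, Finset.sum_add_distrib]

lemma hasDerivAt_mulVecFn {m l : ℕ} (B : Matrix (Fin m) (Fin l) ℝ) {v : ℝ → Fin l → ℝ}
    {w : Fin l → ℝ} {t : ℝ} (hv : HasDerivAt v w t) :
    HasDerivAt (fun s => B.mulVec (v s)) (B.mulVec w) t := by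
  rw [hasDerivAt_pi]
  intro i
  have := HasDerivAt.fun_sum (fun j (_ : j ∈ Finset.univ) =>
    (hasDerivAt_pi.mp hv j).const_mul (B i j))
  simpa [mulVec, dotProduct] using this

lemma sym_dot {n : ℕ} {M : Matrix (Fin n) (Fin n) ℝ} (hM : Mᵀ = M) (x y : Fin n → ℝ) :
    M.mulVec x ⬝ᵥ y = M.mulVec y ⬝ᵥ x := by
  rw [dotProduct_comm, dotProduct_mulVec, ← mulVec_transpose, hM]

lemma herm_real {n : ℕ} {M : Matrix (Fin n) (Fin n) ℝ} (h : M.IsHermitian) : Mᵀ = M := by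
  simpa [Matrix.conjTranspose_eq_transpose_of_trivial] using h.eq

lemma psd_nonneg {n : ℕ} {M : Matrix (Fin n) (Fin n) ℝ} (h : M.PosSemidef) (x : Fin n → ℝ) :
    0 ≤ M.mulVec x ⬝ᵥ x := by
  have := h.dotProduct_mulVec_nonneg x
  simpa [dotProduct_comm] using this

/-- Long-term behavior with strictly positive damping: the accumulated damping integrals
`∫_{t₀}^∞ ⟨M u'(s), u'(s)⟩ ds` and `∫_{t₀}^∞ ⟨K u'(s), u'(s)⟩ ds` are finite. -/
theorem piezo_discrete_damping_integrable {n k : ℕ}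
    (M K : Matrix (Fin n) (Fin n) ℝ) (A : Matrix (Fin k) (Fin k) ℝ)
    (C : Matrix (Fin n) (Fin k) ℝ) (α β : ℝ)
    (hM : M.PosDef) (hK : K.PosSemidef) (hA : A.PosDef)
    (hα : 0 < α) (hβ : 0 < β)
    (t₀ : ℝ) (ht₀ : 0 ≤ t₀)
    (f : ℝ → Fin n → ℝ) (hf : Continuous f)
    (g g' : ℝ → Fin k → ℝ) (hg : ∀ t, HasDerivAt g (g' t) t) (hg' : Continuous g')
    (hf0 : ∀ t ≥ t₀, f t = 0) (hg0 : ∀ t ≥ t₀, g t = 0)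
    (u u' u'' : ℝ → Fin n → ℝ) (φ φ' : ℝ → Fin k → ℝ)
    (hsol : PiezoSolves M K A C α β f g u u' u'' φ (Ici 0))
    (hu'' : ContinuousOn u'' (Ici 0))
    (hφ : ∀ t ∈ Ici (0 : ℝ), HasDerivAt φ (φ' t) t)
    (hφ' : ContinuousOn φ' (Ici 0)) :
    IntegrableOn (fun s => M.mulVec (u' s) ⬝ᵥ u' s) (Ici t₀) ∧
    IntegrableOn (fun s => K.mulVec (u' s) ⬝ᵥ u' s) (Ici t₀) := by
  obtain ⟨hu, hu', heq1, heq2⟩ := hsol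
  have hMt : Mᵀ = M := herm_real hM.1
  have hKt : Kᵀ = K := herm_real hK.1
  have hAt : Aᵀ = A := herm_real hA.1
  set q : ℝ → ℝ := fun s => α * (M.mulVec (u' s) ⬝ᵥ u' s) + β * (K.mulVec (u' s) ⬝ᵥ u' s)
    with hqdef
  set E : ℝ → ℝ := fun s =>
    (M.mulVec (u' s) ⬝ᵥ u' s + K.mulVec (u s) ⬝ᵥ u s + A.mulVec (φ s) ⬝ᵥ φ s) / 2 with hEdef
  have hucont : ContinuousOn u (Ici 0) :=
    fun t ht => (hu t ht).continuousAt.continuousWithinAt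
  have hu'cont : ContinuousOn u' (Ici 0) :=
    fun t ht => (hu' t ht).continuousAt.continuousWithinAt
  have hφcont : ContinuousOn φ (Ici 0) :=
    fun t ht => (hφ t ht).continuousAt.continuousWithinAt
  have cquad : ∀ {m : ℕ} (B : Matrix (Fin m) (Fin m) ℝ),
      Continuous (fun x : Fin m → ℝ => B.mulVec x ⬝ᵥ x) := fun B =>
    (Continuous.matrix_mulVec continuous_const continuous_id).dotProduct continuous_id
  have hMq : ContinuousOn (fun s => M.mulVec (u' s) ⬝ᵥ u' s) (Ici 0) :=
    (cquad M).comp_continuousOn hu'cont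
  have hKq : ContinuousOn (fun s => K.mulVec (u' s) ⬝ᵥ u' s) (Ici 0) :=
    (cquad K).comp_continuousOn hu'cont
  have hqcont : ContinuousOn q (Ici 0) :=
    (continuousOn_const.mul hMq).add (continuousOn_const.mul hKq)
  have hEcont : ContinuousOn E (Ici 0) :=
    ((hMq.add ((cquad K).comp_continuousOn hucont)).add
      ((cquad A).comp_continuousOn hφcont)).div_const 2
  have hqnonneg : ∀ s, 0 ≤ q s := fun s =>
    add_nonneg (mul_nonneg hα.le (psd_nonneg hM.posSemidef _))
      (mul_nonneg hβ.le (psd_nonneg hK _))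
  have hEnonneg : ∀ s, 0 ≤ E s := fun s =>
    div_nonneg (add_nonneg (add_nonneg (psd_nonneg hM.posSemidef _) (psd_nonneg hK _))
      (psd_nonneg hA.posSemidef _)) two_pos.le
  have hEderiv : ∀ t ∈ Ioi t₀, HasDerivAt E (-(q t)) t := by
    intro t ht
    have ht' : t₀ < t := ht
    have ht0 : t ∈ Ici (0:ℝ) := le_trans ht₀ ht'.le
    -- constraint derivative : A φ' = Cᵀ u'
    have hconstr : A.mulVec (φ' t) = Cᵀ.mulVec (u' t) := by
      have h1 : HasDerivAt (fun s => Cᵀ.mulVec (u s) - A.mulVec (φ s))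
          (Cᵀ.mulVec (u' t) - A.mulVec (φ' t)) t :=
        (hasDerivAt_mulVecFn Cᵀ (hu t ht0)).sub (hasDerivAt_mulVecFn A (hφ t ht0))
      have h2 : (fun s => Cᵀ.mulVec (u s) - A.mulVec (φ s)) =ᶠ[nhds t] (fun _ => 0) := by
        filter_upwards [Ioi_mem_nhds ht'] with s hs
        rw [heq2 s (le_trans ht₀ (le_of_lt hs)), hg0 s (le_of_lt hs)]
      have h3 : HasDerivAt (fun _ : ℝ => (0 : Fin k → ℝ))
          (Cᵀ.mulVec (u' t) - A.mulVec (φ' t)) t := h1.congr_of_eventuallyEq h2.symm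
      have h4 := h3.unique (hasDerivAt_const t (0 : Fin k → ℝ))
      exact (sub_eq_zero.mp h4).symm
    have d1 := hasDerivAt_quad M u' (u'' t) t (hu' t ht0)
    have d2 := hasDerivAt_quad K u (u' t) t (hu t ht0)
    have d3 := hasDerivAt_quad A φ (φ' t) t (hφ t ht0)
    have dE := ((d1.add d2).add d3).div_const 2
    have e1 : M.mulVec (u'' t) ⬝ᵥ u' t + α * (M.mulVec (u' t) ⬝ᵥ u' t)
        + K.mulVec (u t) ⬝ᵥ u' t + β * (K.mulVec (u' t) ⬝ᵥ u' t)
        + C.mulVec (φ t) ⬝ᵥ u' t = 0 := by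
      have := congrArg (fun z => z ⬝ᵥ u' t) (heq1 t ht0)
      simpa [add_dotProduct, smul_dotProduct, smul_eq_mul, hf0 t ht'.le] using this
    have e3 : A.mulVec (φ' t) ⬝ᵥ φ t = C.mulVec (φ t) ⬝ᵥ u' t := by
      rw [hconstr, mulVec_transpose, ← dotProduct_mulVec, dotProduct_comm]
    have hval : (M.mulVec (u'' t) ⬝ᵥ u' t + M.mulVec (u' t) ⬝ᵥ u'' t
        + (K.mulVec (u' t) ⬝ᵥ u t + K.mulVec (u t) ⬝ᵥ u' t)
        + (A.mulVec (φ' t) ⬝ᵥ φ t + A.mulVec (φ t) ⬝ᵥ φ' t)) / 2 = -(q t) := by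
      rw [sym_dot hMt (u' t) (u'' t), sym_dot hKt (u' t) (u t), sym_dot hAt (φ t) (φ' t)]
      rw [hqdef]
      dsimp only
      linarith [e1, e3]
    rw [← hval]
    exact dE
  -- FTC bound
  have key : ∀ b, t₀ ≤ b → (∫ y in t₀..b, q y) ≤ E t₀ := by
    intro b hb
    have hsub : Icc t₀ b ⊆ Ici (0:ℝ) := fun x hx => le_trans ht₀ hx.1
    have hint : IntegrableOn q (Icc t₀ b) :=
      (hqcont.mono hsub).integrableOn_compact isCompact_Icc
    have hle := intervalIntegral.integral_le_sub_of_hasDeriv_right_of_le hb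
      (g := fun s => -E s) (g' := q) (φ := q)
      ((hEcont.mono hsub).neg)
      (fun x hx => by have h := (hEderiv x hx.1).neg; rw [neg_neg] at h; exact h.hasDerivWithinAt)
      hint (fun x _ => le_refl _)
    linarith [hEnonneg b, hle]
  have hqint : IntegrableOn q (Ici t₀) := by
    rw [integrableOn_Ici_iff_integrableOn_Ioi]
    apply integrableOn_Ioi_of_intervalIntegral_norm_bounded (E t₀) t₀
      (f := q) (b := fun i : ℝ => i) (l := atTop)
    · intro i
      have hsub : Icc t₀ i ⊆ Ici (0:ℝ) := fun x hx => le_trans ht₀ hx.1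
      exact ((hqcont.mono hsub).integrableOn_compact isCompact_Icc).mono_set Ioc_subset_Icc_self
    · exact tendsto_id
    · filter_upwards [eventually_ge_atTop t₀] with i hi
      have : (∫ x in t₀..i, ‖q x‖) = ∫ x in t₀..i, q x := by
        apply intervalIntegral.integral_congr
        intro x _
        exact Real.norm_of_nonneg (hqnonneg x)
      rw [this]
      exact key i hi
  have measM : AEStronglyMeasurable (fun s => M.mulVec (u' s) ⬝ᵥ u' s)
      (volume.restrict (Ici t₀)) :=
    (hMq.mono (Ici_subset_Ici.mpr ht₀)).aestronglyMeasurable measurableSet_Ici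
  have measK : AEStronglyMeasurable (fun s => K.mulVec (u' s) ⬝ᵥ u' s)
      (volume.restrict (Ici t₀)) :=
    (hKq.mono (Ici_subset_Ici.mpr ht₀)).aestronglyMeasurable measurableSet_Ici
  constructor
  · apply Integrable.mono' (hqint.const_mul α⁻¹) measM
    apply ae_of_all
    intro s
    rw [Real.norm_of_nonneg (psd_nonneg hM.posSemidef _)]
    rw [hqdef]
    dsimp only
    rw [mul_add]
    have h1 : α⁻¹ * (α * (M.mulVec (u' s) ⬝ᵥ u' s)) = M.mulVec (u' s) ⬝ᵥ u' s := by
      field_simp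
    have h2 : 0 ≤ α⁻¹ * (β * (K.mulVec (u' s) ⬝ᵥ u' s)) :=
      mul_nonneg (inv_nonneg.mpr hα.le) (mul_nonneg hβ.le (psd_nonneg hK _))
    linarith
  · apply Integrable.mono' (hqint.const_mul β⁻¹) measK
    apply ae_of_all
    intro s
    rw [Real.norm_of_nonneg (psd_nonneg hK _)]
    rw [hqdef]
    dsimp only
    rw [mul_add]
    have h1 : β⁻¹ * (β * (K.mulVec (u' s) ⬝ᵥ u' s)) = K.mulVec (u' s) ⬝ᵥ u' s := by
      field_simp
    have h2 : 0 ≤ β⁻¹ * (α * (M.mulVec (u' s) ⬝ᵥ u' s)) :=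
      mul_nonneg (inv_nonneg.mpr hβ.le) (mul_nonneg hα.le (psd_nonneg hM.posSemidef _))
    linarith
end
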